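/- Let f(x) := ∏_{i=1}^n (1 + 2cosh(2πx_i/√3))^{−1} on ℝⁿ. Then for every x = (x₁,…,xₙ) ∈ ℝⁿ and every 0 < u ≤ 1, log f(ux) − log f(x) ≥ ((1−u)·2π/√3) · Σ_{i=1}^n x_i·tanh(2πu x_i/√3) / (1 + sech(2πu x_i/√3)/2). -/

import Mathlib

open Real

noncomputable section

private def gfun (t : ℝ) : ℝ := Real.log (1 + 2 * Real.cosh t)
private def phi (t : ℝ) : ℝ := 2 * Real.sinh t / (1 + 2 * Real.cosh t)

private lemma pos_denom (t : ℝ) : 0 < 1 + 2 * Real.cosh t := by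
  have := Real.cosh_pos (x := t); linarith

private lemma hasDerivAt_g (t : ℝ) : HasDerivAt gfun (phi t) t := by
  have h1 : HasDerivAt (fun s => 1 + 2 * Real.cosh s) (2 * Real.sinh t) t := by
    exact ((Real.hasDerivAt_cosh t).const_mul 2).const_add 1
  have := h1.log (ne_of_gt (pos_denom t))
  exact this

private lemma hasDerivAt_phi (t : ℝ) :
    HasDerivAt phi ((2 * Real.cosh t * (1 + 2 * Real.cosh t) -
      2 * Real.sinh t * (2 * Real.sinh t)) / (1 + 2 * Real.cosh t) ^ 2) t := by
  have h1 : HasDerivAt (fun s => 2 * Real.sinh s) (2 * Real.cosh t) t :=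
    (Real.hasDerivAt_sinh t).const_mul 2
  have h2 : HasDerivAt (fun s => 1 + 2 * Real.cosh s) (2 * Real.sinh t) t := by
    exact ((Real.hasDerivAt_cosh t).const_mul 2).const_add 1
  exact h1.div h2 (ne_of_gt (pos_denom t))

private lemma phi_mono : Monotone phi := by
  have hdiff : Differentiable ℝ phi := fun t => (hasDerivAt_phi t).differentiableAt
  apply monotone_of_deriv_nonneg hdiff
  intro t
  rw [(hasDerivAt_phi t).deriv]
  apply div_nonneg _ (sq_nonneg _)
  have h1 := Real.cosh_sq_sub_sinh_sq t
  have h2 := Real.cosh_pos (x := t)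
  nlinarith

private lemma key (u a : ℝ) (hu0 : 0 < u) (hu1 : u ≤ 1) :
    (a - u * a) * phi (u * a) ≤ gfun a - gfun (u * a) := by
  rcases lt_trichotomy (u * a) a with h | h | h
  · obtain ⟨c, hc, hc'⟩ := exists_hasDerivAt_eq_slope gfun phi h
      (fun t _ => ((hasDerivAt_g t).continuousAt).continuousWithinAt)
      (fun t _ => hasDerivAt_g t)
    have hne : a - u * a ≠ 0 := by linarith
    have h1 : gfun a - gfun (u * a) = phi c * (a - u * a) :=
      ((eq_div_iff hne).mp hc').symm
    rw [h1]
    have hnn : (0:ℝ) ≤ a - u * a := by linarith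
    rw [mul_comm]
    exact mul_le_mul_of_nonneg_right (phi_mono hc.1.le) hnn
  · rw [h, sub_self, zero_mul, sub_self]
  · obtain ⟨c, hc, hc'⟩ := exists_hasDerivAt_eq_slope gfun phi h
      (fun t _ => ((hasDerivAt_g t).continuousAt).continuousWithinAt)
      (fun t _ => hasDerivAt_g t)
    have hne : u * a - a ≠ 0 := sub_ne_zero.mpr (ne_of_gt h)
    have h1 := (eq_div_iff hne).mp hc'
    have h2 := mul_le_mul_of_nonneg_right (phi_mono hc.2.le) (by linarith : (0:ℝ) ≤ u * a - a)
    nlinarith [h1, h2]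

/-- A step in the proof of Lemma 1: with
`f(x) = ∏ᵢ (1 + 2cosh(2πxᵢ/√3))⁻¹`, for every `x ∈ ℝⁿ` and `0 < u ≤ 1`,
`log f(ux) − log f(x) ≥ ((1−u)2π/√3) Σᵢ xᵢ tanh(2πuxᵢ/√3)/(1 + sech(2πuxᵢ/√3)/2)`. -/
theorem stmt_13 {n : ℕ}
    (f : EuclideanSpace ℝ (Fin n) → ℝ)
    (hf : ∀ x, f x = ∏ i, (1 + 2 * Real.cosh (2 * π * x i / Real.sqrt 3))⁻¹)
    (x : EuclideanSpace ℝ (Fin n)) (u : ℝ) (hu0 : 0 < u) (hu1 : u ≤ 1) :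
    Real.log (f (u • x)) - Real.log (f x) ≥
      (1 - u) * 2 * π / Real.sqrt 3 *
        ∑ i, x i * Real.tanh (2 * π * u * x i / Real.sqrt 3) /
          (1 + (Real.cosh (2 * π * u * x i / Real.sqrt 3))⁻¹ / 2) := by
  have s3 : (0:ℝ) < Real.sqrt 3 := by positivity
  set a : Fin n → ℝ := fun i => 2 * π * x i / Real.sqrt 3 with ha
  have hlog : ∀ y : EuclideanSpace ℝ (Fin n),
      Real.log (f y) = -∑ i, gfun (2 * π * y i / Real.sqrt 3) := by
    intro y
    rw [hf, Real.log_prod (fun i _ => by positivity)]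
    simp [gfun, Real.log_inv]
  have harg : ∀ i : Fin n, 2 * π * ((u • x) i) / Real.sqrt 3 = u * a i := by
    intro i
    have : (u • x) i = u * x i := rfl
    rw [this, ha]; ring
  have harg2 : ∀ i : Fin n, 2 * π * u * x i / Real.sqrt 3 = u * a i := by
    intro i; rw [ha]; ring
  rw [ge_iff_le, hlog (u • x), hlog x]
  have hterm : ∀ i : Fin n,
      (1 - u) * 2 * π / Real.sqrt 3 *
        (x i * Real.tanh (2 * π * u * x i / Real.sqrt 3) /
          (1 + (Real.cosh (2 * π * u * x i / Real.sqrt 3))⁻¹ / 2))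
      = (a i - u * a i) * phi (u * a i) := by
    intro i
    rw [harg2 i, Real.tanh_eq_sinh_div_cosh, phi, ha]
    have hc := Real.cosh_pos (x := u * a i)
    have hd := pos_denom (u * a i)
    rw [ha] at hc hd
    field_simp
    ring
  rw [Finset.mul_sum]
  rw [Finset.sum_congr rfl (fun i _ => hterm i)]
  have : -∑ i, gfun (2 * π * ((u • x) i) / Real.sqrt 3) - -∑ i, gfun (a i)
      = ∑ i, (gfun (a i) - gfun (u * a i)) := by
    rw [Finset.sum_congr rfl (fun i _ => by rw [harg i])]
    rw [Finset.sum_sub_distrib]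
    ring
  rw [this]
  exact Finset.sum_le_sum (fun i _ => key u (a i) hu0 hu1)

end
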